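/- arXiv:2502.07379 — 6 statements merged into one kernel-verified Lean document; each statement's English description precedes it below -/
import Mathlib

section
/- Let n be a positive even natural number such that the binary expansion of n contains no two consecutive 1's (i.e., for all j, not (Nat.testBit n j = true and Nat.testBit n (j+1) = true)). Let p be the largest natural number such that 2^p divides n (so p >= 1), let r satisfy 2^r <= n < 2^(r+1), set m = 2^(r+1) - 1 - n and alpha = n/2 - 2^(p-1). Then choose(m, i) is odd for every i with alpha <= i <= alpha + 2^p - 1, and choose(m, alpha + 2^p) is even. -/
private lemma testBit_split (a b i j : ℕ) (hb : b < 2 ^ i) :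
    Nat.testBit (2 ^ i * a + b) j =
      if j < i then b.testBit j else a.testBit (j - i) := by
  rcases lt_or_ge j i with h | h
  · rw [if_pos h, Nat.testBit_eq_decide_div_mod_eq, Nat.testBit_eq_decide_div_mod_eq]
    have h1 : 2 ^ i * a + b = b + 2 ^ j * (2 ^ (i - j) * a) := by
      rw [← mul_assoc, ← pow_add, show j + (i - j) = i by omega]; ring
    have h2 : 2 ^ (i - j) * a = 2 * (2 ^ (i - j - 1) * a) := by
      rw [← mul_assoc, show (2:ℕ) * 2 ^ (i - j - 1) = 2 ^ (i - j - 1 + 1) by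
        rw [pow_succ]; ring, show i - j - 1 + 1 = i - j by omega]
    rw [h1, Nat.add_mul_div_left _ _ (Nat.two_pow_pos j), h2,
      Nat.add_mul_mod_self_left]
  · rw [if_neg (by omega), Nat.testBit_eq_decide_div_mod_eq, Nat.testBit_eq_decide_div_mod_eq]
    have h1 : (2:ℕ) ^ j = 2 ^ i * 2 ^ (j - i) := by
      rw [← pow_add]; congr 1; omega
    have h2 : (2 ^ i * a + b) / 2 ^ i = a := by
      rw [Nat.mul_add_div (Nat.two_pow_pos i), Nat.div_eq_of_lt hb]; omega
    rw [h1, ← Nat.div_div_eq_div_mul, h2]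

private lemma odd_choose_base (a b : ℕ) :
    Odd (Nat.choose (a % 2) (b % 2)) ↔ (b % 2 = 1 → a % 2 = 1) := by
  rcases Nat.mod_two_eq_zero_or_one a with h | h <;>
    rcases Nat.mod_two_eq_zero_or_one b with h' | h' <;>
      simp [h, h', Nat.odd_iff]

private lemma odd_choose_iff (i m : ℕ) :
    Odd (Nat.choose m i) ↔ ∀ j, i.testBit j = true → m.testBit j = true := by
  induction i using Nat.strong_induction_on generalizing m with
  | _ i ih =>
    rcases Nat.eq_zero_or_pos i with rfl | hi
    · simp [Nat.zero_testBit]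
    · haveI : Fact (Nat.Prime 2) := ⟨Nat.prime_two⟩
      have hmod2 : Nat.choose m i % 2 =
          (Nat.choose (m % 2) (i % 2) * Nat.choose (m / 2) (i / 2)) % 2 :=
        Choose.choose_modEq_choose_mod_mul_choose_div_nat (p := 2)
      rw [Nat.odd_iff, hmod2, ← Nat.odd_iff, Nat.odd_mul, odd_choose_base,
        ih (i / 2) (Nat.div_lt_self hi one_lt_two) (m / 2)]
      constructor
      · rintro ⟨h0, hs⟩ j hj
        cases j with
        | zero =>
          rw [Nat.testBit_zero] at hj ⊢
          simp only [decide_eq_true_eq] at hj ⊢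
          exact h0 hj
        | succ j =>
          rw [Nat.testBit_succ] at hj ⊢
          exact hs j hj
      · intro h
        refine ⟨fun hb => ?_, fun j hj => ?_⟩
        · have := h 0 (by rw [Nat.testBit_zero]; simp [hb])
          rw [Nat.testBit_zero] at this; simpa using this
        · have := h (j + 1) (by rw [Nat.testBit_succ]; exact hj)
          rw [Nat.testBit_succ] at this; exact this

/-- Corollary 5.6: for even `n > 0` with no two consecutive binary 1's,
`p` the 2-adic valuation of `n`, `2^r ≤ n < 2^(r+1)`, `m = 2^(r+1) - 1 - n` and
`alpha = n/2 - 2^(p-1)`, the coefficients `choose m i` are odd for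
`alpha ≤ i ≤ alpha + 2^p - 1`, and `choose m (alpha + 2^p)` is even. -/
theorem interval_of_ones (n p r : ℕ) (hn : 0 < n) (heven : 2 ∣ n)
    (hnoconsec : ∀ j : ℕ, ¬(Nat.testBit n j = true ∧ Nat.testBit n (j + 1) = true))
    (hp : 2 ^ p ∣ n) (hp' : ¬ 2 ^ (p + 1) ∣ n) (hp1 : 1 ≤ p)
    (hr : 2 ^ r ≤ n) (hr' : n < 2 ^ (r + 1))
    (m alpha : ℕ) (hm : m = 2 ^ (r + 1) - 1 - n) (halpha : alpha = n / 2 - 2 ^ (p - 1)) :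
    (∀ i : ℕ, alpha ≤ i → i ≤ alpha + 2 ^ p - 1 → Odd (Nat.choose m i)) ∧
      Even (Nat.choose m (alpha + 2 ^ p)) := by
  obtain ⟨k, hk⟩ := hp
  have hppos := Nat.two_pow_pos p
  have hk1 : k % 2 = 1 := by
    rcases Nat.mod_two_eq_zero_or_one k with h | h
    · exact absurd ⟨k / 2, by rw [hk, pow_succ, mul_assoc]; congr 1; omega⟩ hp'
    · exact h
  set u := k / 2 with hudef
  have hu : k = 2 * u + 1 := by omega
  have h2p : (2:ℕ) ^ p = 2 * 2 ^ (p - 1) := by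
    rw [show (2:ℕ) * 2 ^ (p - 1) = 2 ^ (p - 1 + 1) by rw [pow_succ]; ring,
      show p - 1 + 1 = p by omega]
  have hn2 : n / 2 = 2 ^ (p - 1) * k := by
    rw [hk, h2p, mul_assoc, Nat.mul_div_cancel_left _ (by norm_num : (0:ℕ) < 2)]
  have halpha' : alpha = 2 ^ p * u := by
    rw [halpha, hn2, hu]
    calc 2 ^ (p - 1) * (2 * u + 1) - 2 ^ (p - 1)
        = 2 ^ (p - 1) * (2 * u) + 2 ^ (p - 1) - 2 ^ (p - 1) := by rw [mul_add, mul_one]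
      _ = 2 ^ (p - 1) * (2 * u) := by omega
      _ = 2 ^ p * u := by rw [h2p]; ring
  have hbn : ∀ j, n.testBit j = if j < p then false else k.testBit (j - p) := by
    intro j
    have := testBit_split k 0 p j hppos
    simpa [hk, Nat.zero_testBit] using this
  have hbm : ∀ j, m.testBit j = (decide (j < r + 1) && !n.testBit j) := by
    intro j
    rw [hm, show 2 ^ (r + 1) - 1 - n = 2 ^ (r + 1) - (n + 1) by omega,
      Nat.testBit_two_pow_sub_succ hr']
  have hk0 : k.testBit 0 = true := by simp [Nat.testBit_zero, hk1]
  have hbnp : n.testBit p = true := by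
    rw [hbn p, if_neg (lt_irrefl p)]; simpa using hk0
  have hknext : n.testBit (p + 1) = false := by
    have hc := hnoconsec p
    rw [hbnp] at hc
    simpa using hc
  have hbu : ∀ s, u.testBit s = n.testBit (p + s + 1) := by
    intro s
    rw [hbn (p + s + 1), if_neg (by omega), show p + s + 1 - p = s + 1 by omega,
      Nat.testBit_succ]
  have hhigh : ∀ j, r < j → n.testBit j = false := by
    intro j hj
    exact Nat.testBit_eq_false_of_lt
      (lt_of_lt_of_le hr' (pow_le_pow_right₀ one_le_two (by omega)))
  have hpr : p ≤ r := by
    have h1 : 2 ^ p ≤ n := Nat.le_of_dvd hn ⟨k, hk⟩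
    have h2 : 2 ^ p < 2 ^ (r + 1) := lt_of_le_of_lt h1 hr'
    have := (Nat.pow_lt_pow_iff_right (by norm_num : 1 < 2)).mp h2
    omega
  constructor
  · intro i h1 h2
    rw [odd_choose_iff]
    intro j hj
    set t := i - alpha with ht
    have hi' : i = 2 ^ p * u + t := by
      rw [← halpha']; omega
    have htlt : t < 2 ^ p := by omega
    rw [hi', testBit_split _ _ _ _ htlt] at hj
    rw [hbm]
    by_cases hjp : j < p
    · have hnj : n.testBit j = false := by rw [hbn j, if_pos hjp]
      simp [hnj, show j < r + 1 by omega]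
    · rw [if_neg hjp] at hj
      have hnj1 : n.testBit (j + 1) = true := by
        have := hbu (j - p)
        rw [show p + (j - p) + 1 = j + 1 by omega] at this
        rw [← this]; exact hj
      have hjr : j + 1 ≤ r := by
        by_contra hcon
        rw [hhigh (j + 1) (by omega)] at hnj1
        exact Bool.false_ne_true hnj1
      have hnj : n.testBit j = false := by
        have hc := hnoconsec j
        rw [hnj1] at hc
        simpa using hc
      simp [hnj, show j < r + 1 by omega]
  · rw [Nat.not_odd_iff_even.symm, odd_choose_iff]
    intro h
    have hu0 : u.testBit 0 = false := by
      rw [hbu 0]; simpa using hknext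
    have hu2 : u % 2 = 0 := by
      rw [Nat.testBit_zero] at hu0
      simp only [decide_eq_false_iff_not] at hu0
      omega
    have ht : (alpha + 2 ^ p).testBit p = true := by
      have heq : alpha + 2 ^ p = 2 ^ p * (u + 1) + 0 := by rw [halpha']; ring
      rw [heq, testBit_split _ _ _ _ hppos, if_neg (lt_irrefl p), Nat.sub_self,
        Nat.testBit_zero]
      simp only [decide_eq_true_eq]
      omega
    have := h p ht
    rw [hbm p, hbnp] at this
    simp at this
end

section
/- Let n be a positive natural number with n congruent to 2 modulo 4 whose binary expansion contains no two consecutive 1's. Let r satisfy 2^r <= n < 2^(r+1) and set m = 2^(r+1) - 1 - n. Then the number choose(m, n/2) * choose(m, n/2) + choose(m, n/2 - 1) * choose(m, n/2 + 1) is odd; consequently, n/2 is the least natural number L such that for every j >= L with 2j + 2 <= n, choose(m, j+1)*choose(m, j+1) + choose(m, j)*choose(m, j+2) is even. -/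
private lemma div2_sum_helper (w a b : ℕ)
    (h2 : a + b = 2 ^ w * 2 - 1) (hp : 0 < 2 ^ w)
    (ha2 : 2 * (a / 2) + a % 2 = a) (hb2 : 2 * (b / 2) + b % 2 = b)
    (hma : a % 2 < 2) (hmb : b % 2 < 2) :
    a % 2 + b % 2 = 1 ∧ a / 2 + b / 2 = 2 ^ w - 1 := by omega

/-- Lucas-type criterion: `n.choose k` is odd iff the binary digits of `k`
are a subset of those of `n`. -/
theorem odd_choose_iff_testBit :
    ∀ n k : ℕ, Odd (n.choose k) ↔ ∀ i, k.testBit i = true → n.testBit i = true := by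
  intro n
  induction n using Nat.strong_induction_on with
  | _ n ih =>
    intro k
    rcases Nat.eq_zero_or_pos n with hn | hn
    · subst hn
      rcases Nat.eq_zero_or_pos k with hk | hk
      · subst hk; simp
      · constructor
        · intro h
          rw [Nat.choose_eq_zero_of_lt hk] at h
          exact absurd h (by simp [Nat.odd_iff])
        · intro h
          exfalso
          have : k = 0 := Nat.eq_of_testBit_eq fun i => by
            rw [Nat.zero_testBit]
            by_contra hc
            simp only [Bool.not_eq_false] at hc
            simpa using h i hc
          omega
    · have hlucas := @Choose.choose_modEq_choose_mod_mul_choose_div_nat n k 2 ⟨Nat.prime_two⟩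
      have hodd : Odd (n.choose k) ↔
          Odd ((n % 2).choose (k % 2)) ∧ Odd ((n / 2).choose (k / 2)) := by
        rw [← Nat.odd_mul, Nat.odd_iff, Nat.odd_iff, Nat.ModEq] at *
        rw [hlucas]
      have hIH := ih (n / 2) (by omega) (k / 2)
      rw [hodd, hIH]
      have hbit0 : Odd ((n % 2).choose (k % 2)) ↔
          (k.testBit 0 = true → n.testBit 0 = true) := by
        have h1 : n % 2 = 0 ∨ n % 2 = 1 := by omega
        have h2 : k % 2 = 0 ∨ k % 2 = 1 := by omega
        rcases h1 with h1 | h1 <;> rcases h2 with h2 | h2 <;>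
          simp [h1, h2, Nat.testBit_zero, Nat.odd_iff]
      rw [hbit0]
      constructor
      · rintro ⟨h0, hs⟩ i
        cases i with
        | zero => exact h0
        | succ i =>
          rw [Nat.testBit_add_one, Nat.testBit_add_one]
          exact hs i
      · intro h
        refine ⟨h 0, fun i hi => ?_⟩
        rw [← Nat.testBit_add_one]
        exact h (i + 1) (by rwa [Nat.testBit_add_one])

/-- Bits of the complement within `2^w - 1`. -/
theorem testBit_of_add_eq_two_pow_sub_one :
    ∀ (w a b : ℕ), a + b = 2 ^ w - 1 →
      ∀ i, a.testBit i = (decide (i < w) && !b.testBit i) := by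
  intro w
  induction w with
  | zero =>
    intro a b h i
    have : a = 0 := by simpa using Nat.le_zero.mp (by omega)
    simp [this, Nat.zero_testBit]
  | succ w ihw =>
    intro a b h i
    have h2 : a + b = 2 ^ w * 2 - 1 := by rw [pow_succ] at h; exact h
    clear h
    have hp : 0 < 2 ^ w := Nat.pow_pos (by norm_num)
    have ha2 : 2 * (a / 2) + a % 2 = a := Nat.div_add_mod a 2
    have hb2 : 2 * (b / 2) + b % 2 = b := Nat.div_add_mod b 2
    have hma : a % 2 < 2 := Nat.mod_lt _ (by norm_num)
    have hmb : b % 2 < 2 := Nat.mod_lt _ (by norm_num)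
    obtain ⟨hmods, hdiv⟩ := div2_sum_helper w a b h2 hp ha2 hb2 hma hmb
    cases i with
    | zero =>
      rw [Nat.testBit_zero, Nat.testBit_zero]
      have hcase : a % 2 = 0 ∧ b % 2 = 1 ∨ a % 2 = 1 ∧ b % 2 = 0 := by omega
      rcases hcase with ⟨h1, h2'⟩ | ⟨h1, h2'⟩ <;> simp [h1, h2', Nat.zero_lt_succ]
    | succ i =>
      rw [Nat.testBit_add_one, Nat.testBit_add_one, ihw (a / 2) (b / 2) hdiv i]
      simp only [Nat.add_lt_add_iff_right]

/-- Theorem 5.9, case a) with `p = 1` (`n ≡ 2 mod 4`, no two consecutive binary 1's):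
`choose(m,n/2)^2 + choose(m,n/2-1)*choose(m,n/2+1)` is odd, and consequently `n/2` is
the least `L` such that for all `j ≥ L` with `2j+2 ≤ n` the number
`choose(m,j+1)^2 + choose(m,j)*choose(m,j+2)` is even. -/
theorem fold_thom_bound_case_a_p1 (n r : ℕ) (hn : 0 < n) (hmod : n % 4 = 2)
    (hnoconsec : ∀ j : ℕ, ¬(Nat.testBit n j = true ∧ Nat.testBit n (j + 1) = true))
    (hr : 2 ^ r ≤ n) (hr' : n < 2 ^ (r + 1))
    (m : ℕ) (hm : m = 2 ^ (r + 1) - 1 - n) :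
    Odd (Nat.choose m (n / 2) * Nat.choose m (n / 2) +
        Nat.choose m (n / 2 - 1) * Nat.choose m (n / 2 + 1)) ∧
      IsLeast {L : ℕ | ∀ j : ℕ, L ≤ j → 2 * j + 2 ≤ n →
        Even (Nat.choose m (j + 1) * Nat.choose m (j + 1) +
          Nat.choose m j * Nat.choose m (j + 2))} (n / 2) := by
  have hmn : m + n = 2 ^ (r + 1) - 1 := by omega
  have hbm : ∀ i, m.testBit i = (decide (i < r + 1) && !n.testBit i) :=
    testBit_of_add_eq_two_pow_sub_one (r + 1) m n hmn
  -- basic bits of n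
  have hb1 : n.testBit 1 = true := by
    rw [Nat.testBit_add_one, Nat.testBit_zero]
    exact decide_eq_true (by omega)
  have hb2 : n.testBit 2 = false := by
    have h := hnoconsec 1
    cases hcb : n.testBit 2 with
    | false => rfl
    | true => exact absurd ⟨hb1, hcb⟩ h
  have hqbit : ∀ i, (n / 2).testBit i = n.testBit (i + 1) := fun i =>
    (Nat.testBit_add_one n i).symm
  -- the main parity fact
  have hoddA : Odd (Nat.choose m (n / 2)) := by
    rw [odd_choose_iff_testBit]
    intro i hi
    rw [hqbit i] at hi
    have hni : n.testBit i = false := by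
      have h := hnoconsec i
      cases hcb : n.testBit i with
      | false => rfl
      | true => exact absurd ⟨hcb, hi⟩ h
    have hile : i + 1 < r + 1 := by
      have h1 : 2 ^ (i + 1) ≤ n := Nat.ge_two_pow_of_testBit hi
      have h2 : (2:ℕ) ^ (i + 1) < 2 ^ (r + 1) := lt_of_le_of_lt h1 hr'
      exact (Nat.pow_lt_pow_iff_right (by norm_num)).mp h2
    rw [hbm i, hni]
    simp [Nat.lt_of_succ_lt_succ hile |>.trans (Nat.lt_succ_self r) ]
  have hevenB : Even (Nat.choose m (n / 2 + 1)) := by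
    rw [← Nat.not_odd_iff_even, odd_choose_iff_testBit]
    intro hall
    have hbit1 : (n / 2 + 1).testBit 1 = true := by
      rw [Nat.testBit_add_one, Nat.testBit_zero]
      have h4 : (n / 2 / 2) % 2 = 0 := by
        have := hb2
        rw [Nat.testBit_add_one, Nat.testBit_add_one, Nat.testBit_zero] at this
        simpa using this
      exact decide_eq_true (by omega)
    have hm1 : m.testBit 1 = false := by
      rw [hbm 1, hb1]
      simp
    have := hall 1 hbit1
    rw [hm1] at this
    exact absurd this (by simp)
  have hodd : Odd (Nat.choose m (n / 2) * Nat.choose m (n / 2) +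
      Nat.choose m (n / 2 - 1) * Nat.choose m (n / 2 + 1)) :=
    (hoddA.mul hoddA).add_even (hevenB.mul_left _)
  refine ⟨hodd, ?_, ?_⟩
  · -- membership: the condition is vacuous for j ≥ n/2
    intro j hj hj2
    exfalso
    omega
  · -- lower bound
    intro L hL
    by_contra hc
    push_neg at hc
    have h1 : L ≤ n / 2 - 1 := by omega
    have h2 := hL (n / 2 - 1) h1 (by omega)
    have e1 : n / 2 - 1 + 1 = n / 2 := by omega
    have e2 : n / 2 - 1 + 2 = n / 2 + 1 := by omega
    rw [e1, e2] at h2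
    exact (Nat.not_odd_iff_even.mpr h2) hodd
end

section
/- Let n be an odd natural number whose binary expansion contains no two consecutive 1's. Let r satisfy 2^r <= n < 2^(r+1) and set m = 2^(r+1) - 1 - n. Then choose(m, (n-1)/2) is odd and choose(m, (n+1)/2) is even; consequently, (n-1)/2 is the least natural number L such that for every j >= L with 2j + 2 <= n, choose(m, j+1)*choose(m, j+1) + choose(m, j)*choose(m, j+2) is even. -/
/-- Lucas' theorem mod 2, one step. -/
lemma lucas_two_step (m k : ℕ) :
    Nat.choose m k % 2 = (Nat.choose (m % 2) (k % 2) * Nat.choose (m / 2) (k / 2)) % 2 :=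
  Choose.choose_modEq_choose_mod_mul_choose_div_nat (p := 2)

/-- If the binary digits of `k` and `n` are disjoint and both are below `2^s`,
then `choose (2^s - 1 - n) k` is odd. -/
lemma odd_choose_mask (s : ℕ) : ∀ n k : ℕ,
    (∀ i, ¬(Nat.testBit k i = true ∧ Nat.testBit n i = true)) →
    k < 2 ^ s → n < 2 ^ s → Nat.choose (2 ^ s - 1 - n) k % 2 = 1 := by
  induction s with
  | zero =>
    intro n k _ hk hn
    interval_cases n
    interval_cases k
    rfl
  | succ s ih =>
    intro n k hdisj hk hn
    set m := 2 ^ (s + 1) - 1 - n with hm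
    have h2 : 2 ^ (s + 1) = 2 * 2 ^ s := by ring
    have hb0 : ¬(k % 2 = 1 ∧ n % 2 = 1) := by
      have := hdisj 0
      simpa [Nat.testBit_zero] using this
    have hmod : Nat.choose (m % 2) (k % 2) = 1 := by
      have hk2 : k % 2 < 2 := Nat.mod_lt _ (by norm_num)
      have hn2 : n % 2 < 2 := Nat.mod_lt _ (by norm_num)
      have hm2 : m % 2 = 1 - n % 2 := by omega
      interval_cases h : n % 2 <;> interval_cases h' : k % 2 <;> simp_all
    have hdiv : m / 2 = 2 ^ s - 1 - n / 2 := by omega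
    have hdisj' : ∀ i, ¬(Nat.testBit (k / 2) i = true ∧ Nat.testBit (n / 2) i = true) := by
      intro i
      simpa [Nat.testBit_div_two] using hdisj (i + 1)
    have ihh := ih (n / 2) (k / 2) hdisj' (by omega) (by omega)
    have := lucas_two_step m k
    rw [hmod, one_mul, hdiv] at this
    omega

/-- `choose even odd` is even. -/
lemma even_choose_of (m k : ℕ) (hm : m % 2 = 0) (hk : k % 2 = 1) :
    Nat.choose m k % 2 = 0 := by
  have := lucas_two_step m k
  rw [hm, hk] at this
  simpa using this

/-- Theorem 5.9, case b) (`n` odd, no two consecutive binary 1's):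
`choose m ((n-1)/2)` is odd and `choose m ((n+1)/2)` is even; consequently `(n-1)/2`
is the least `L` such that for all `j ≥ L` with `2j+2 ≤ n` the number
`choose(m,j+1)^2 + choose(m,j)*choose(m,j+2)` is even. -/
theorem fold_thom_bound_case_b (n r : ℕ) (hodd : Odd n)
    (hnoconsec : ∀ j : ℕ, ¬(Nat.testBit n j = true ∧ Nat.testBit n (j + 1) = true))
    (hr : 2 ^ r ≤ n) (hr' : n < 2 ^ (r + 1))
    (m : ℕ) (hm : m = 2 ^ (r + 1) - 1 - n) :
    Odd (Nat.choose m ((n - 1) / 2)) ∧ Even (Nat.choose m ((n + 1) / 2)) ∧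
      IsLeast {L : ℕ | ∀ j : ℕ, L ≤ j → 2 * j + 2 ≤ n →
        Even (Nat.choose m (j + 1) * Nat.choose m (j + 1) +
          Nat.choose m j * Nat.choose m (j + 2))} ((n - 1) / 2) := by
  obtain ⟨c, hc⟩ := hodd
  have hn1 : n % 2 = 1 := by omega
  have ht : (n - 1) / 2 = n / 2 := by omega
  have ht' : (n + 1) / 2 = n / 2 + 1 := by omega
  -- Oddness
  have hdisj : ∀ i, ¬(Nat.testBit (n / 2) i = true ∧ Nat.testBit n i = true) := by
    intro i ⟨h1, h2⟩
    rw [Nat.testBit_div_two] at h1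
    exact hnoconsec i ⟨h2, h1⟩
  have hoddc : Nat.choose m (n / 2) % 2 = 1 := by
    rw [hm]
    exact odd_choose_mask (r + 1) n (n / 2) hdisj (by omega) hr'
  -- Evenness
  have hbit1 : Nat.testBit n 1 = false := by
    have := hnoconsec 0
    have hb0 : Nat.testBit n 0 = true := by simp [Nat.testBit_zero, hn1]
    simpa [hb0] using this
  have hn2even : n / 2 % 2 = 0 := by
    have : Nat.testBit n 1 = decide (n / 2 % 2 = 1) := by
      rw [← Nat.testBit_div_two, Nat.testBit_zero]
    rw [hbit1] at this
    simpa using this.symm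
  have hmeven : m % 2 = 0 := by
    have h2 : 2 ^ (r + 1) = 2 * 2 ^ r := by ring
    omega
  have hevenc : Nat.choose m (n / 2 + 1) % 2 = 0 :=
    even_choose_of m (n / 2 + 1) hmeven (by omega)
  rw [ht, ht']
  refine ⟨Nat.odd_iff.mpr hoddc, Nat.even_iff.mpr hevenc, ?_, ?_⟩
  · intro j hj hj'
    omega
  · intro L hL
    by_contra hlt
    push_neg at hlt
    have hn3 : 3 ≤ n := by
      rcases Nat.lt_or_ge n 3 with h | h
      · interval_cases n <;> omega
      · exact h
    have hj := hL (n / 2 - 1) (by omega) (by omega)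
    have e1 : n / 2 - 1 + 1 = n / 2 := by omega
    have e2 : n / 2 - 1 + 2 = n / 2 + 1 := by omega
    rw [e1, e2] at hj
    rw [Nat.even_add, Nat.even_mul, Nat.even_mul] at hj
    simp [Nat.even_iff, hoddc, hevenc] at hj
end

section
/- Let u, a, b be natural numbers with b < 2^u and with the binary expansion of a containing no two consecutive 1's (i.e., for all j, not (Nat.testBit a j = true and Nat.testBit a (j+1) = true)). Set n = 2^u * (8a + 3) + b and kappa = 2^(u+2) * a + 2^u - 1 - b. Then the binomial coefficient choose(n + kappa, n) is odd, and the binomial coefficient choose(n + kappa + 1, n) is even. -/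
/-- If two naturals have disjoint binary expansions and both are `< 2^i`,
their sum is `< 2^i` (no carries). -/
lemma aux_add_lt_two_pow_of_and_eq_zero :
    ∀ (i x y : ℕ), x &&& y = 0 → x < 2 ^ i → y < 2 ^ i → x + y < 2 ^ i := by
  intro i
  induction i with
  | zero => intro x y h hx hy; simp at hx hy; omega
  | succ i ih =>
    intro x y h hx hy
    have h2 : (x / 2) &&& (y / 2) = 0 := by
      apply Nat.eq_of_testBit_eq
      intro j
      have := congrArg (fun z => Nat.testBit z (j + 1)) h
      simp only [Nat.testBit_and, Nat.zero_testBit] at this ⊢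
      simpa [Nat.testBit_div_two] using this
    have h0 : x % 2 = 0 ∨ y % 2 = 0 := by
      by_contra hcon
      push_neg at hcon
      have h1 : (x &&& y) % 2 = 1 :=
        Nat.and_mod_two_eq_one.mpr ⟨by omega, by omega⟩
      rw [h] at h1
      simp at h1
    rw [pow_succ] at hx hy ⊢
    have := ih (x / 2) (y / 2) h2 (by omega) (by omega)
    omega

/-- Disjointness is preserved by taking residues mod `2^i`. -/
lemma aux_mod_and_mod (m n i : ℕ) (h : m &&& n = 0) :
    m % 2 ^ i &&& n % 2 ^ i = 0 := by
  apply Nat.eq_of_testBit_eq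
  intro j
  have := congrArg (fun z => Nat.testBit z j) h
  simp only [Nat.testBit_and, Nat.zero_testBit, Nat.testBit_mod_two_pow] at this ⊢
  cases hm : Nat.testBit m j <;> cases hn' : Nat.testBit n j <;> simp_all

/-- Theorem 5.9, case d): for `n = 2^u (8a+3) + b` with `b < 2^u` and `a` having no
two consecutive binary 1's, and `kappa = 2^(u+2) a + 2^u - 1 - b`, the binomial
coefficient `choose (n+kappa) n` is odd while `choose (n+kappa+1) n` is even. -/
theorem fold_thom_bound_case_d (u a b : ℕ) (hb : b < 2 ^ u)
    (hnoconsec : ∀ j : ℕ, ¬(Nat.testBit a j = true ∧ Nat.testBit a (j + 1) = true))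
    (n kappa : ℕ) (hn : n = 2 ^ u * (8 * a + 3) + b)
    (hkappa : kappa = 2 ^ (u + 2) * a + (2 ^ u - 1 - b)) :
    Odd (Nat.choose (n + kappa) n) ∧ Even (Nat.choose (n + kappa + 1) n) := by
  have h2u : 0 < 2 ^ u := pow_pos (by norm_num : (0:ℕ) < 2) u
  have hp1 : 2 ^ (u + 1) = 2 * 2 ^ u := by rw [pow_succ]; ring
  have hp2 : 2 ^ (u + 2) = 4 * 2 ^ u := by rw [pow_succ, pow_succ]; ring
  have hp3 : 2 ^ (u + 3) = 8 * 2 ^ u := by rw [pow_succ, pow_succ, pow_succ]; ring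
  set c := 2 ^ u - 1 - b with hc
  have hcb : c = 2 ^ u - (b + 1) := by omega
  have hclt : c < 2 ^ u := by omega
  have e4 : 2 ^ (u + 2) * (2 * a) = 2 ^ u * (8 * a) := by rw [hp2]; ring
  have e3 : 2 ^ u * (8 * a + 3) = 2 ^ u * (8 * a) + 3 * 2 ^ u := by ring
  have hn' : n = 2 ^ (u + 2) * (2 * a) + (2 ^ (u + 1) + 2 ^ u + b) := by omega
  have hmlt : 2 ^ (u + 1) + 2 ^ u + b < 2 ^ (u + 2) := by omega
  have hclt2 : c < 2 ^ (u + 2) := by omega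
  -- n and kappa have disjoint binary expansions
  have hdisj : n &&& kappa = 0 := by
    apply Nat.eq_of_testBit_eq
    intro j
    simp only [Nat.testBit_and, Nat.zero_testBit]
    rw [hn', hkappa]
    rw [Nat.testBit_two_pow_mul_add _ hmlt, Nat.testBit_two_pow_mul_add _ hclt2]
    rcases lt_or_ge j (u + 2) with hj | hj
    · simp only [hj, if_pos]
      have hcbit : Nat.testBit c j = (decide (j < u) && !Nat.testBit b j) := by
        rw [hcb, Nat.testBit_two_pow_sub_succ hb]
      rcases lt_or_ge j u with hju | hju
      · have hmeq : 2 ^ (u + 1) + 2 ^ u + b = 2 ^ u * 3 + b := by omega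
        rw [hmeq, Nat.testBit_two_pow_mul_add _ hb]
        simp only [hju, if_pos, hcbit]
        cases Nat.testBit b j <;> simp [hju]
      · rw [hcbit]
        simp [Nat.not_lt.mpr hju]
    · rw [if_neg (Nat.not_lt.mpr hj), if_neg (Nat.not_lt.mpr hj)]
      cases ht : j - (u + 2) with
      | zero =>
        have h0 : Nat.testBit (2 * a) 0 = false := by
          simp [Nat.testBit_zero, Nat.mul_mod_right]
        rw [h0, Bool.false_and]
      | succ s =>
        have heq : Nat.testBit (2 * a) (s + 1) = Nat.testBit a s := by
          rw [← Nat.testBit_div_two, Nat.mul_div_cancel_left _ (by norm_num)]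
        rw [heq]
        have hnc := hnoconsec s
        cases hs : Nat.testBit a s
        · rw [Bool.false_and]
        · cases hs1 : Nat.testBit a (s + 1)
          · rw [Bool.and_false]
          · exact absurd ⟨hs, hs1⟩ hnc
  -- no carries: residues mod 2^i sum to < 2^i
  have hnocarry : ∀ i, n % 2 ^ i + kappa % 2 ^ i < 2 ^ i := fun i =>
    aux_add_lt_two_pow_of_and_eq_zero i _ _ (aux_mod_and_mod n kappa i hdisj)
      (Nat.mod_lt _ (pow_pos (by norm_num : (0:ℕ) < 2) i))
      (Nat.mod_lt _ (pow_pos (by norm_num : (0:ℕ) < 2) i))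
  haveI : Fact (Nat.Prime 2) := ⟨Nat.prime_two⟩
  constructor
  · -- Odd part
    have hcomm : n + kappa = kappa + n := by omega
    rw [hcomm]
    have hval : padicValNat 2 ((kappa + n).choose n) = 0 := by
      rw [padicValNat_choose' (b := Nat.log 2 (kappa + n) + 1) (Nat.lt_succ_self _)]
      rw [Finset.card_eq_zero, Finset.filter_eq_empty_iff]
      intro i _
      exact Nat.not_le.mpr (hnocarry i)
    have hpos : 0 < (kappa + n).choose n := Nat.choose_pos (Nat.le_add_left n kappa)
    have hnd : ¬ 2 ∣ (kappa + n).choose n := by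
      rcases (padicValNat.eq_zero_iff).mp hval with h | h | h
      · norm_num at h
      · omega
      · exact h
    rw [Nat.odd_iff]
    omega
  · -- Even part
    have hcomm : n + kappa + 1 = (kappa + 1) + n := by omega
    rw [hcomm]
    have e1 : 2 ^ (u + 2) * a = 2 ^ (u + 1) * (2 * a) := by rw [hp1, hp2]; ring
    have e2 : 2 ^ (u + 1) * (4 * a + 1) = 2 ^ u * (8 * a) + 2 * 2 ^ u := by
      rw [hp1]; ring
    have hk1 : kappa + 1 = 2 ^ (u + 1) * (2 * a) + (2 ^ u - b) := by omega
    have hnn : n = 2 ^ (u + 1) * (4 * a + 1) + (2 ^ u + b) := by omega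
    have hnmod : n % 2 ^ (u + 1) = 2 ^ u + b := by
      rw [hnn, Nat.mul_add_mod, Nat.mod_eq_of_lt (by omega)]
    have hkmod : (kappa + 1) % 2 ^ (u + 1) = 2 ^ u - b := by
      rw [hk1, Nat.mul_add_mod, Nat.mod_eq_of_lt (by omega)]
    have hcarry : 2 ^ (u + 1) ≤ n % 2 ^ (u + 1) + (kappa + 1) % 2 ^ (u + 1) := by
      rw [hnmod, hkmod]; omega
    have hlog : u + 1 ≤ Nat.log 2 ((kappa + 1) + n) := by
      rw [Nat.le_log_iff_pow_le (by norm_num) (by omega)]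
      omega
    have hval : 1 ≤ padicValNat 2 (((kappa + 1) + n).choose n) := by
      rw [padicValNat_choose' (b := Nat.log 2 ((kappa + 1) + n) + 1)
        (Nat.lt_succ_self _)]
      rw [Nat.succ_le_iff, Finset.card_pos]
      exact ⟨u + 1, Finset.mem_filter.mpr
        ⟨Finset.mem_Ico.mpr ⟨by omega, by omega⟩, hcarry⟩⟩
    have hdvd : 2 ∣ ((kappa + 1) + n).choose n := dvd_of_one_le_padicValNat hval
    obtain ⟨t, ht⟩ := hdvd
    exact ⟨t, by omega⟩
end

section
/- Let n be a positive even natural number whose binary expansion contains no two consecutive 1's, let p be the largest natural number with 2^p dividing n (so p >= 1), and set alpha = n/2 - 2^(p-1). Then for every natural number j with j <= 2^p - 2, the binomial coefficient choose(alpha + 2^p - 1, j + 1) is odd and the binomial coefficient choose(alpha + j, j + 1) is even. -/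
/-- One step of Lucas's theorem mod 2. -/
lemma choose_mod_two_step (n k : ℕ) :
    Nat.choose n k ≡ Nat.choose (n % 2) (k % 2) * Nat.choose (n / 2) (k / 2) [MOD 2] :=
  haveI : Fact (Nat.Prime 2) := ⟨Nat.prime_two⟩
  Choose.choose_modEq_choose_mod_mul_choose_div_nat

/-- Odd part: `choose (2^(q+1)*s + 2^q - 1) k` is odd for `k < 2^q`. -/
lemma choose_odd_aux (q : ℕ) : ∀ s k : ℕ, k < 2 ^ q →
    Nat.choose (2 ^ (q + 1) * s + 2 ^ q - 1) k % 2 = 1 := by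
  induction q with
  | zero =>
    intro s k hk
    interval_cases k
    simp
  | succ q ih =>
    intro s k hk
    have hN : 2 ^ (q + 2) * s + 2 ^ (q + 1) - 1
        = 2 * (2 ^ (q + 1) * s + 2 ^ q - 1) + 1 := by
      have h1 : (1:ℕ) ≤ 2 ^ q := Nat.one_le_two_pow
      ring_nf
      omega
    have hmod := choose_mod_two_step (2 ^ (q + 2) * s + 2 ^ (q + 1) - 1) k
    rw [hN] at hmod ⊢
    have hNmod : (2 * (2 ^ (q + 1) * s + 2 ^ q - 1) + 1) % 2 = 1 := by omega
    have hNdiv : (2 * (2 ^ (q + 1) * s + 2 ^ q - 1) + 1) / 2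
        = 2 ^ (q + 1) * s + 2 ^ q - 1 := by omega
    rw [hNmod, hNdiv] at hmod
    have hk2 : k / 2 < 2 ^ q := by
      have : k < 2 * 2 ^ q := by
        have : 2 ^ (q + 1) = 2 * 2 ^ q := by ring
        omega
      omega
    have hc1 : Nat.choose 1 (k % 2) = 1 := by
      have : k % 2 = 0 ∨ k % 2 = 1 := by omega
      rcases this with h | h <;> simp [h]
    rw [hc1, one_mul] at hmod
    have := ih s (k / 2) hk2
    unfold Nat.ModEq at hmod
    omega

/-- Even part: `choose (2^q*s + j) (j+1)` is even for `0 < s` and `j+1 < 2^q`. -/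
lemma choose_even_aux (q : ℕ) : ∀ s j : ℕ, 0 < s → j + 1 < 2 ^ q →
    Nat.choose (2 ^ q * s + j) (j + 1) % 2 = 0 := by
  induction q with
  | zero => intro s j _ hj; omega
  | succ q ih =>
    intro s j hs hj
    have hmod := choose_mod_two_step (2 ^ (q + 1) * s + j) (j + 1)
    have h2q : j + 1 < 2 * 2 ^ q := by
      have : 2 ^ (q + 1) = 2 * 2 ^ q := by ring
      omega
    rcases Nat.even_or_odd j with ⟨t, ht⟩ | ⟨t, ht⟩
    · -- j = 2t, k = 2t+1 : low digit choose 0 1 = 0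
      have hN : 2 ^ (q + 1) * s + j = 2 * (2 ^ q * s + t) := by rw [ht]; ring
      have hNmod : (2 ^ (q + 1) * s + j) % 2 = 0 := by omega
      have hkmod : (j + 1) % 2 = 1 := by omega
      rw [hNmod, hkmod] at hmod
      simp only [Nat.choose] at hmod
      unfold Nat.ModEq at hmod
      simpa using hmod
    · -- j = 2t+1, k = 2t+2 : low digit choose 1 0 = 1, recurse
      have hN : 2 ^ (q + 1) * s + j = 2 * (2 ^ q * s + t) + 1 := by rw [ht]; ring
      have hNmod : (2 ^ (q + 1) * s + j) % 2 = 1 := by omega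
      have hkmod : (j + 1) % 2 = 0 := by omega
      have hNdiv : (2 ^ (q + 1) * s + j) / 2 = 2 ^ q * s + t := by omega
      have hkdiv : (j + 1) / 2 = t + 1 := by omega
      rw [hNmod, hkmod, hNdiv, hkdiv] at hmod
      simp only [Nat.choose_self, Nat.choose_zero_right, one_mul] at hmod
      have ht2 : t + 1 < 2 ^ q := by omega
      have := ih s t hs ht2
      unfold Nat.ModEq at hmod
      omega

/-- The binomial-parity lemma from the proof of Theorem 6.3: for even `n > 0` with no
two consecutive binary 1's, `p` the 2-adic valuation of `n` (`p ≥ 1`) and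
`alpha = n/2 - 2^(p-1)`, for every `j ≤ 2^p - 2` the coefficient
`choose (alpha + 2^p - 1) (j+1)` is odd and `choose (alpha + j) (j+1)` is even. -/
theorem sigma2_euler_binomials (n p : ℕ) (hn : 0 < n) (heven : 2 ∣ n)
    (hnoconsec : ∀ j : ℕ, ¬(Nat.testBit n j = true ∧ Nat.testBit n (j + 1) = true))
    (hp : 2 ^ p ∣ n) (hp' : ¬ 2 ^ (p + 1) ∣ n) (hp1 : 1 ≤ p)
    (alpha : ℕ) (halpha : alpha = n / 2 - 2 ^ (p - 1)) :
    ∀ j : ℕ, j ≤ 2 ^ p - 2 →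
      Odd (Nat.choose (alpha + 2 ^ p - 1) (j + 1)) ∧
        Even (Nat.choose (alpha + j) (j + 1)) := by
  -- write n = 2^p * m with m odd
  obtain ⟨m, hm⟩ := hp
  have hmodd : m % 2 = 1 := by
    rcases Nat.even_or_odd m with ⟨t, ht⟩ | ⟨t, ht⟩
    · exfalso; apply hp'; exact ⟨t, by rw [hm, ht]; ring⟩
    · omega
  -- testBit n (p+1) = false, hence m % 4 = 1
  have hbitp : Nat.testBit n p = true := by
    rw [hm, Nat.testBit_eq_decide_div_mod_eq]
    have h1 : 2 ^ p * m / 2 ^ p = m :=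
      Nat.mul_div_cancel_left _ (Nat.two_pow_pos p)
    simp [h1, hmodd]
  have hbitp1 : Nat.testBit n (p + 1) = false := by
    by_contra h
    exact hnoconsec p ⟨hbitp, by simpa using h⟩
  have hm4 : m % 4 = 1 := by
    rw [hm, Nat.testBit_eq_decide_div_mod_eq] at hbitp1
    have hdiv : 2 ^ p * m / 2 ^ (p + 1) = m / 2 := by
      rw [pow_succ]
      exact Nat.mul_div_mul_left m 2 (Nat.two_pow_pos p)
    rw [hdiv] at hbitp1
    simp only [decide_eq_false_iff_not] at hbitp1
    omega
  obtain ⟨s, hs⟩ : ∃ s, m = 4 * s + 1 := ⟨m / 4, by omega⟩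
  -- alpha = 2^(p+1) * s
  have hp2 : 2 ^ p = 2 * 2 ^ (p - 1) := by
    conv_lhs => rw [show p = (p - 1) + 1 by omega]
    ring
  have hn2 : n / 2 = 2 ^ (p - 1) * m := by
    have : n = 2 * (2 ^ (p - 1) * m) := by rw [hm, hp2]; ring
    omega
  have halpha' : alpha = 2 ^ (p + 1) * s := by
    rw [halpha, hn2, hs]
    have h1 : 2 ^ (p - 1) * (4 * s + 1) = 2 ^ (p + 1) * s + 2 ^ (p - 1) := by
      rw [show p + 1 = (p - 1) + 2 by omega]; ring
    omega
  intro j hj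
  have h2p : (2:ℕ) ≤ 2 ^ p := by
    calc (2:ℕ) = 2 ^ 1 := rfl
    _ ≤ 2 ^ p := Nat.pow_le_pow_right (by norm_num) hp1
  constructor
  · -- odd part
    have hk : j + 1 < 2 ^ p := by omega
    have := choose_odd_aux p s (j + 1) hk
    rw [halpha', Nat.odd_iff]
    exact this
  · -- even part
    rcases Nat.eq_zero_or_pos s with h0 | hspos
    · rw [halpha', h0, Nat.mul_zero, Nat.zero_add]
      rw [Nat.choose_eq_zero_of_lt (by omega)]
      exact Even.zero
    · have hk : j + 1 < 2 ^ (p + 1) := by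
        have : 2 ^ (p + 1) = 2 * 2 ^ p := by ring
        omega
      have := choose_even_aux (p + 1) s j hspos hk
      rw [halpha', Nat.even_iff]
      exact this
end

section
/- Let n be a positive even natural number whose binary expansion contains no two consecutive 1's, let p be the largest natural number with 2^p dividing n (so p >= 1), let r satisfy 2^r <= n < 2^(r+1), and set m = 2^(r+1) - 1 - n, c = n/2 - 2^(p-1) + 1, and q = 2^p - 2 (so that n = 2c + q). Let k >= 2 and let lambda_1 >= lambda_2 >= ... >= lambda_k >= 1 be a weakly decreasing sequence of positive natural numbers with lambda_2 >= c and lambda_1 + ... + lambda_k <= n. Let B be the k-by-k matrix over ZMod 2 whose (i,j) entry (for i, j = 1, ..., k) is choose(m, lambda_i + j - i) reduced mod 2 when lambda_i + j - i >= 0, and 0 when lambda_i + j - i < 0. Then det B = 1 if and only if there exists a natural number t with t <= q such that k = q - t + 2, lambda_1 = c + t, lambda_2 = c, and lambda_i = 1 for all i with 3 <= i <= k. -/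
private lemma choose_mod_two_eq_one_iff (m : ℕ) : ∀ a : ℕ,
    Nat.choose m a % 2 = 1 ↔ ∀ i, a.testBit i = true → m.testBit i = true := by
  induction m using Nat.strong_induction_on with
  | _ m ih =>
    intro a
    rcases Nat.eq_zero_or_pos m with hm | hm
    · subst hm
      rcases Nat.eq_zero_or_pos a with ha | ha
      · subst ha; simp
      · rw [Nat.choose_eq_zero_of_lt (by omega)]
        simp only [Nat.zero_testBit]
        constructor
        · omega
        · intro h
          exfalso
          have : a = 0 := Nat.eq_of_testBit_eq (fun i => by
            specialize h i
            simp only [Nat.zero_testBit]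
            by_contra hc
            simp only [Bool.not_eq_false] at hc
            exact absurd (h hc) (by simp))
          omega
    · haveI : Fact (Nat.Prime 2) := ⟨Nat.prime_two⟩
      have key : Nat.choose m a % 2 =
          (Nat.choose (m % 2) (a % 2) * Nat.choose (m / 2) (a / 2)) % 2 :=
        Choose.choose_modEq_choose_mod_mul_choose_div_nat (p := 2)
      have ih2 := ih (m / 2) (by omega) (a / 2)
      have hlow : Nat.choose (m % 2) (a % 2) % 2 = 1 ↔
          (a.testBit 0 = true → m.testBit 0 = true) := by
        have h1 : m % 2 = 0 ∨ m % 2 = 1 := by omega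
        have h2 : a % 2 = 0 ∨ a % 2 = 1 := by omega
        rcases h1 with h1 | h1 <;> rcases h2 with h2 | h2 <;>
          simp [h1, h2, Nat.testBit_zero]
      have hsplit : (∀ i, a.testBit i = true → m.testBit i = true) ↔
          ((a.testBit 0 = true → m.testBit 0 = true) ∧
            (∀ i, (a / 2).testBit i = true → (m / 2).testBit i = true)) := by
        constructor
        · intro h
          refine ⟨h 0, fun i hi => ?_⟩
          rw [Nat.testBit_div_two] at hi ⊢
          exact h (i + 1) hi
        · rintro ⟨h0, hs⟩ i hi
          cases i with
          | zero => exact h0 hi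
          | succ i =>
            rw [← Nat.testBit_div_two] at hi ⊢
            exact hs i hi
      rw [key, Nat.mul_mod, hsplit, ← hlow, ← ih2]
      have e1 : Nat.choose (m % 2) (a % 2) % 2 = 0 ∨ Nat.choose (m % 2) (a % 2) % 2 = 1 := by omega
      have e2 : Nat.choose (m / 2) (a / 2) % 2 = 0 ∨ Nat.choose (m / 2) (a / 2) % 2 = 1 := by omega
      rcases e1 with e1 | e1 <;> rcases e2 with e2 | e2 <;> simp [e1, e2]

private lemma cast_choose_eq_one {n r a : ℕ} (hn : n < 2 ^ (r + 1)) (ha : a ≤ n)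
    (h : ∀ i, a.testBit i = true → n.testBit i = false) :
    ((Nat.choose (2 ^ (r + 1) - 1 - n) a : ℕ) : ZMod 2) = 1 := by
  have hmod : Nat.choose (2 ^ (r + 1) - 1 - n) a % 2 = 1 := by
    rw [choose_mod_two_eq_one_iff]
    intro i hi
    have hge : 2 ^ i ≤ a := Nat.ge_two_pow_of_testBit hi
    have hir : i < r + 1 := by
      by_contra hc
      have : 2 ^ (r + 1) ≤ 2 ^ i := Nat.pow_le_pow_right (by norm_num) (by omega)
      omega
    have heq : 2 ^ (r + 1) - 1 - n = 2 ^ (r + 1) - (n + 1) := by omega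
    rw [heq, Nat.testBit_two_pow_sub_succ hn]
    simp [hir, h i hi]
  rw [← ZMod.natCast_mod _ 2, hmod]
  norm_num

private lemma cast_choose_eq_zero {n r a : ℕ} (hn : n < 2 ^ (r + 1)) {i : ℕ}
    (hai : a.testBit i = true) (hni : n.testBit i = true) :
    ((Nat.choose (2 ^ (r + 1) - 1 - n) a : ℕ) : ZMod 2) = 0 := by
  have hmod : Nat.choose (2 ^ (r + 1) - 1 - n) a % 2 = 0 := by
    by_contra hc
    have h1 : Nat.choose (2 ^ (r + 1) - 1 - n) a % 2 = 1 := by omega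
    rw [choose_mod_two_eq_one_iff] at h1
    have := h1 i hai
    have heq : 2 ^ (r + 1) - 1 - n = 2 ^ (r + 1) - (n + 1) := by omega
    rw [heq, Nat.testBit_two_pow_sub_succ hn, hni] at this
    simp at this
  rw [← ZMod.natCast_mod _ 2, hmod]
  norm_num

set_option maxHeartbeats 2000000 in
/-- Proposition 5.11 (prop:avoiding_obstructions), stated arithmetically: for even
`n > 0` with no two consecutive binary 1's, `p` the 2-adic valuation of `n`,
`m = 2^(r+1)-1-n`, `c = n/2 - 2^(p-1) + 1` and `q = 2^p - 2`, a Jacobi-Trudi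
determinant `det (choose m (lambda_i + j - i))` over `ZMod 2` (entries `0` when
`lambda_i + j - i < 0`) for a partition `lambda` of length `k ≥ 2` with
`lambda_2 ≥ c` and `|lambda| ≤ n` equals `1` iff `lambda = (c+t, c, 1^(q-t))`
for some `t ≤ q`. -/
theorem schur_obstructions_on_RPn (n p r : ℕ) (hn : 0 < n) (heven : 2 ∣ n)
    (hnoconsec : ∀ j : ℕ, ¬(Nat.testBit n j = true ∧ Nat.testBit n (j + 1) = true))
    (hp : 2 ^ p ∣ n) (hp' : ¬ 2 ^ (p + 1) ∣ n) (hp1 : 1 ≤ p)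
    (hr : 2 ^ r ≤ n) (hr' : n < 2 ^ (r + 1))
    (m c q : ℕ) (hm : m = 2 ^ (r + 1) - 1 - n)
    (hc : c = n / 2 - 2 ^ (p - 1) + 1) (hq : q = 2 ^ p - 2)
    (k : ℕ) (hk : 2 ≤ k)
    (lam : Fin k → ℕ) (hdec : Antitone lam) (hpos : ∀ i, 1 ≤ lam i)
    (hlam2 : c ≤ lam ⟨1, by omega⟩) (hsum : ∑ i, lam i ≤ n)
    (B : Matrix (Fin k) (Fin k) (ZMod 2))
    (hB : ∀ i j : Fin k, B i j =
      if (i : ℕ) ≤ lam i + (j : ℕ) then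
        ((Nat.choose m (lam i + (j : ℕ) - (i : ℕ)) : ZMod 2)) else 0) :
    B.det = 1 ↔
      ∃ t : ℕ, t ≤ q ∧ k = q - t + 2 ∧
        lam ⟨0, by omega⟩ = c + t ∧ lam ⟨1, by omega⟩ = c ∧
        ∀ i : Fin k, 2 ≤ (i : ℕ) → lam i = 1 := by
  obtain ⟨k', rfl⟩ : ∃ k', k = k' + 2 := ⟨k - 2, by omega⟩
  have hlt0 : 0 < k' + 2 := by omega
  have hlt1 : 1 < k' + 2 := by omega
  have hlam1 : c ≤ lam ⟨1, hlt1⟩ := hlam2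
  -- basic powers
  have hP2 : 2 ^ p = 2 * 2 ^ (p - 1) := by
    rw [← pow_succ']; congr 1; omega
  have hPpos : 0 < 2 ^ (p - 1) := Nat.pow_pos (by norm_num)
  have hPn : 2 ^ p ≤ n := Nat.le_of_dvd hn hp
  -- the quotient u = n / 2^p is ≡ 1 mod 4
  obtain ⟨u, hu⟩ := hp
  have hu2 : ¬ (2 ∣ u) := by
    intro ⟨w, hw⟩
    exact hp' ⟨w, by rw [hu, hw, pow_succ]; ring⟩
  have hbitp : n.testBit p = true := by
    rw [Nat.testBit_eq_decide_div_mod_eq]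
    have hq1 : n / 2 ^ p = u := by
      rw [hu]; exact Nat.mul_div_cancel_left u (Nat.pow_pos (by norm_num))
    rw [hq1]
    simp only [decide_eq_true_eq]
    omega
  have hbitp1 : n.testBit (p + 1) = false := by
    by_contra hcon
    exact hnoconsec p ⟨hbitp, by simpa using hcon⟩
  have hu4 : u % 4 = 1 := by
    have hdiv : n / 2 ^ (p + 1) = u / 2 := by
      rw [pow_succ, ← Nat.div_div_eq_div_mul, hu,
        Nat.mul_div_cancel_left u (Nat.pow_pos (by norm_num))]
    rw [Nat.testBit_eq_decide_div_mod_eq, hdiv] at hbitp1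
    simp only [decide_eq_false_iff_not] at hbitp1
    omega
  obtain ⟨v, hv⟩ : ∃ v, u = 4 * v + 1 := ⟨u / 4, by omega⟩
  -- e is the key quantity: n = 2e + 2^p, c = e + 1
  obtain ⟨e, hev⟩ : ∃ e, e = 2 ^ (p + 1) * v := ⟨_, rfl⟩
  have hne : n = 2 * e + 2 ^ p := by
    rw [hu, hv, hev, pow_succ]; ring
  have hce : c = e + 1 := by
    have h2 : n / 2 = e + 2 ^ (p - 1) := by omega
    omega
  have hqe : q + 2 = 2 ^ p := by omega
  -- bits of n below p are zero
  have bit_low : ∀ i, i < p → n.testBit i = false := by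
    intro i hi
    rw [hu, Nat.testBit_two_pow_mul]
    simp [Nat.not_le.mpr hi]
  -- bits of e avoid bits of n
  have bit_e : ∀ i, e.testBit i = true → n.testBit i = false := by
    intro i hi
    rw [hev, Nat.testBit_two_pow_mul] at hi
    have hei : (p + 1 ≤ i) ∧ v.testBit (i - (p + 1)) = true := by simpa using hi
    have hn1 : n.testBit (i + 1) = true := by
      have hnv : n = 2 ^ (p + 2) * v + 2 ^ p := by rw [hu, hv]; ring
      rw [hnv, Nat.testBit_two_pow_mul_add _
        (Nat.pow_lt_pow_right (by norm_num) (by omega))]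
      have h1 : ¬ (i + 1 < p + 2) := by omega
      simp only [h1, if_false]
      have h2 : i + 1 - (p + 2) = i - (p + 1) := by omega
      rw [h2]
      exact hei.2
    by_contra hcon
    exact hnoconsec i ⟨by simpa using hcon, hn1⟩
  -- value lemmas
  have hV1 : ∀ a, a ≤ q + 1 → ((Nat.choose m a : ℕ) : ZMod 2) = 1 := by
    intro a ha
    rw [hm]
    refine cast_choose_eq_one hr' (by omega) ?_
    intro i hi
    have hge : 2 ^ i ≤ a := Nat.ge_two_pow_of_testBit hi
    have hip : i < p := by
      by_contra hcon
      have : 2 ^ p ≤ 2 ^ i := Nat.pow_le_pow_right (by norm_num) (by omega)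
      omega
    exact bit_low i hip
  have hV2 : ∀ s, s ≤ q + 1 → ((Nat.choose m (e + s) : ℕ) : ZMod 2) = 1 := by
    intro s hs
    rw [hm]
    refine cast_choose_eq_one hr' (by omega) ?_
    intro i hi
    have hs2 : s < 2 ^ (p + 1) := by
      have : (2:ℕ) ^ p ≤ 2 ^ (p + 1) := Nat.pow_le_pow_right (by norm_num) (by omega)
      omega
    rw [hev, Nat.testBit_two_pow_mul_add _ hs2] at hi
    by_cases hip : i < p + 1
    · simp only [hip, if_true] at hi
      have hge : 2 ^ i ≤ s := Nat.ge_two_pow_of_testBit hi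
      have hilt : i < p := by
        by_contra hcon
        have : 2 ^ p ≤ 2 ^ i := Nat.pow_le_pow_right (by norm_num) (by omega)
        omega
      exact bit_low i hilt
    · simp only [hip, if_false] at hi
      refine bit_e i ?_
      rw [hev, Nat.testBit_two_pow_mul]
      simpa [Nat.le_of_not_lt hip] using hi
  have hV3 : ((Nat.choose m (e + 2 ^ p) : ℕ) : ZMod 2) = 0 := by
    rw [hm]
    refine cast_choose_eq_zero hr' (a := e + 2 ^ p) (i := p) ?_ hbitp
    rw [hev, Nat.testBit_two_pow_mul_add _
      (Nat.pow_lt_pow_right (by norm_num) (by omega))]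
    simp [Nat.lt_succ_self, Nat.testBit_two_pow_self]
  -- sum bounds
  have hsum_gen : ∀ s : Finset (Fin (k' + 2)),
      ∑ i ∈ s, lam i + ((k' + 2) - s.card) ≤ n := by
    intro s
    have h1 : ∑ i ∈ s, lam i + ∑ i ∈ sᶜ, lam i = ∑ i, lam i :=
      Finset.sum_add_sum_compl s lam
    have h2 : sᶜ.card • 1 ≤ ∑ i ∈ sᶜ, lam i :=
      Finset.card_nsmul_le_sum sᶜ lam 1 (fun x _ => hpos x)
    have h3 : sᶜ.card = (k' + 2) - s.card := by
      rw [Finset.card_compl]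
      simp
    simp only [smul_eq_mul, mul_one] at h2
    omega
  have hne01 : (⟨0, hlt0⟩ : Fin (k' + 2)) ≠ ⟨1, hlt1⟩ := by
    simp [Fin.ext_iff]
  have hsum2 : lam ⟨0, hlt0⟩ + lam ⟨1, hlt1⟩ + k' ≤ n := by
    have := hsum_gen {⟨0, hlt0⟩, ⟨1, hlt1⟩}
    rw [Finset.sum_pair hne01, Finset.card_pair hne01] at this
    omega
  have hlam0 : c ≤ lam ⟨0, hlt0⟩ :=
    le_trans hlam1 (hdec (show (⟨0, hlt0⟩ : Fin (k' + 2)) ≤ ⟨1, hlt1⟩ by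
      simp [Fin.le_def]))
  have hup0 : lam ⟨0, hlt0⟩ + (k' + 1) ≤ e + 2 ^ p := by omega
  -- row lemmas
  have hrow1 : ∀ j : Fin (k' + 2), B ⟨1, hlt1⟩ j = 1 := by
    intro j
    rw [hB]
    have hposa := hpos (⟨1, hlt1⟩ : Fin (k' + 2))
    have hval1 : ((⟨1, hlt1⟩ : Fin (k' + 2)) : ℕ) = 1 := rfl
    rw [hval1]
    rw [if_pos (by omega)]
    have hjk : (j : ℕ) ≤ k' + 1 := by have := j.isLt; omega
    obtain ⟨s, hs, heq⟩ : ∃ s, s ≤ q + 1 ∧ lam ⟨1, hlt1⟩ + (j : ℕ) - 1 = e + s :=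
      ⟨lam ⟨1, hlt1⟩ + (j : ℕ) - 1 - e, by omega, by omega⟩
    rw [heq]
    exact hV2 s hs
  have hrow0 : ∀ j : Fin (k' + 2), B ⟨0, hlt0⟩ j =
      if lam ⟨0, hlt0⟩ + (j : ℕ) = e + 2 ^ p then 0 else 1 := by
    intro j
    rw [hB]
    have hval0 : ((⟨0, hlt0⟩ : Fin (k' + 2)) : ℕ) = 0 := rfl
    rw [hval0, if_pos (by omega), Nat.sub_zero]
    have hjk : (j : ℕ) ≤ k' + 1 := by have := j.isLt; omega
    by_cases heq : lam ⟨0, hlt0⟩ + (j : ℕ) = e + 2 ^ p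
    · rw [if_pos heq, heq]; exact hV3
    · rw [if_neg heq]
      obtain ⟨s, hs, h⟩ : ∃ s, s ≤ q + 1 ∧ lam ⟨0, hlt0⟩ + (j : ℕ) = e + s :=
        ⟨lam ⟨0, hlt0⟩ + (j : ℕ) - e, by omega, by omega⟩
      rw [h]
      exact hV2 s hs
  have hrow2 : ∀ i j : Fin (k' + 2), 2 ≤ (i : ℕ) →
      B i j = if (i : ℕ) ≤ lam i + (j : ℕ) then 1 else 0 := by
    intro i j hi2
    rw [hB]
    by_cases hcond : (i : ℕ) ≤ lam i + (j : ℕ)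
    · rw [if_pos hcond, if_pos hcond]
      have hne0 : (⟨0, hlt0⟩ : Fin (k' + 2)) ≠ i := by
        intro h; rw [← h] at hi2; simp at hi2
      have hne1 : (⟨1, hlt1⟩ : Fin (k' + 2)) ≠ i := by
        intro h; rw [← h] at hi2; simp at hi2
      have hsum3 : lam ⟨0, hlt0⟩ + lam ⟨1, hlt1⟩ + lam i + (k' - 1) ≤ n := by
        have hmem : (⟨0, hlt0⟩ : Fin (k' + 2)) ∉ ({⟨1, hlt1⟩, i} : Finset (Fin (k' + 2))) := by
          simp only [Finset.mem_insert, Finset.mem_singleton]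
          push_neg
          exact ⟨hne01, hne0⟩
        have hmem2 : (⟨1, hlt1⟩ : Fin (k' + 2)) ∉ ({i} : Finset (Fin (k' + 2))) := by
          simp only [Finset.mem_singleton]
          exact hne1
        have := hsum_gen {⟨0, hlt0⟩, ⟨1, hlt1⟩, i}
        rw [Finset.sum_insert hmem, Finset.sum_insert hmem2, Finset.sum_singleton,
          Finset.card_insert_of_notMem hmem, Finset.card_insert_of_notMem hmem2,
          Finset.card_singleton] at this
        have hk1 : 1 ≤ k' := by have := i.isLt; omega
        omega
      have hval : lam i + (j : ℕ) - (i : ℕ) ≤ q + 1 := by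
        have hjk : (j : ℕ) ≤ k' + 1 := by have := j.isLt; omega
        omega
      exact hV1 _ hval
    · rw [if_neg hcond, if_neg hcond]
  -- main case analysis
  by_cases h0 : lam ⟨0, hlt0⟩ + (k' + 1) = e + 2 ^ p
  · by_cases h2 : ∀ i : Fin (k' + 2), 2 ≤ (i : ℕ) → lam i = 1
    · -- the good case: det = 1 and the shape holds
      refine iff_of_true ?_ ⟨lam ⟨0, hlt0⟩ - c, by omega, by omega, by omega, ?_, h2⟩
      · -- determinant computation
        have hrow0' : ∀ j : Fin (k' + 2),
            B ⟨0, hlt0⟩ j = if (j : ℕ) = k' + 1 then 0 else 1 := by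
          intro j
          rw [hrow0 j]
          have hj := j.isLt
          by_cases hj1 : (j : ℕ) = k' + 1
          · rw [if_pos hj1, if_pos (by omega)]
          · rw [if_neg hj1, if_neg (by omega)]
        have hAll : ∀ s : Fin (k' + 2), 1 ≤ (s : ℕ) → ∀ j : Fin (k' + 2),
            B s j = if (s : ℕ) ≤ (j : ℕ) + 1 then 1 else 0 := by
          intro s hs1 j
          rcases Nat.lt_or_ge (s : ℕ) 2 with hs2 | hs2
          · have hseq : s = ⟨1, hlt1⟩ := Fin.ext (show (s : ℕ) = 1 by omega)
            have hval : ((⟨1, hlt1⟩ : Fin (k' + 2)) : ℕ) = 1 := rfl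
            rw [hseq, hval, hrow1 j, if_pos (by omega)]
          · rw [hrow2 s j hs2, h2 s hs2]
            by_cases hij : (s : ℕ) ≤ (j : ℕ) + 1
            · rw [if_pos (by omega), if_pos hij]
            · rw [if_neg (by omega), if_neg hij]
        have hdetA : (B.updateRow ⟨0, hlt0⟩ (B ⟨0, hlt0⟩ + B ⟨1, hlt1⟩)).det = B.det :=
          Matrix.det_updateRow_add_self B hne01
        set A : Matrix (Fin (k' + 2)) (Fin (k' + 2)) (ZMod 2) :=
          B.updateRow ⟨0, hlt0⟩ (B ⟨0, hlt0⟩ + B ⟨1, hlt1⟩) with hAdef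
        have hU : A.submatrix (finRotate (k' + 2)) id =
            fun i j : Fin (k' + 2) => if (i : ℕ) ≤ (j : ℕ) then (1 : ZMod 2) else 0 := by
          funext i j
          simp only [Matrix.submatrix_apply, id_eq]
          rw [finRotate_succ_apply]
          rcases eq_or_ne i (Fin.last (k' + 1)) with hlast | hlast
          · subst hlast
            rw [Fin.last_add_one]
            have h00 : (0 : Fin (k' + 2)) = ⟨0, hlt0⟩ := rfl
            rw [h00, hAdef, Matrix.updateRow_self]
            have hlv : ((Fin.last (k' + 1) : Fin (k' + 2)) : ℕ) = k' + 1 := rfl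
            rw [Pi.add_apply, hrow0' j, hrow1 j, hlv]
            have hj := j.isLt
            by_cases hj1 : (j : ℕ) = k' + 1
            · rw [if_pos hj1, if_pos (by omega)]
              exact zero_add 1
            · rw [if_neg hj1, if_neg (by omega)]
              exact CharTwo.add_self_eq_zero 1
          · have hilt : (i : ℕ) < k' + 1 := by
              have h1 := i.isLt
              have h2' : (i : ℕ) ≠ k' + 1 := fun h => hlast (Fin.ext h)
              omega
            have hv1 : ((i + 1 : Fin (k' + 2)) : ℕ) = (i : ℕ) + 1 := by
              rw [Fin.val_add_one]
              simp [hlast]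
            rw [hAdef, Matrix.updateRow_ne
              (Fin.ne_of_val_ne (by rw [hv1]; exact Nat.succ_ne_zero _))]
            rw [hAll (i + 1) (by omega) j, hv1]
            by_cases hij : (i : ℕ) ≤ (j : ℕ)
            · rw [if_pos (by omega), if_pos hij]
            · rw [if_neg (by omega), if_neg hij]
        have hUdet : (A.submatrix (finRotate (k' + 2)) id).det = 1 := by
          rw [hU]
          change (Matrix.of fun i j : Fin (k' + 2) =>
            if (i : ℕ) ≤ (j : ℕ) then (1 : ZMod 2) else 0).det = 1
          rw [Matrix.det_of_upperTriangular (by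
            intro i j hji
            simp only [id_eq] at hji
            have : ¬ ((i : ℕ) ≤ (j : ℕ)) := by
              rw [Fin.lt_def] at hji; omega
            simp [this, hji])]
          simp
        have hperm := Matrix.det_permute (finRotate (k' + 2)) A
        rw [hUdet] at hperm
        rcases Int.units_eq_one_or (Equiv.Perm.sign (finRotate (k' + 2))) with hsg | hsg <;>
          rw [hsg] at hperm <;>
          simp only [Units.val_one, Units.val_neg, Int.cast_one, Int.cast_neg,
            neg_mul, one_mul, CharTwo.neg_eq] at hperm <;>
          rw [← hdetA, ← hperm]
      · -- lam_1 = c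
        omega
    · -- some row below the second has lam ≥ 2 : two equal rows
      push_neg at h2
      obtain ⟨iw, hiw2, hiwne⟩ := h2
      have hiw : 2 ≤ lam iw := by have := hpos iw; omega
      have hk1 : 2 < k' + 2 := by have := iw.isLt; omega
      have hlam22 : 2 ≤ lam ⟨2, hk1⟩ :=
        le_trans hiw (hdec (show (⟨2, hk1⟩ : Fin (k' + 2)) ≤ iw by
          rw [Fin.le_def]; exact hiw2))
      have hroweq : B ⟨2, hk1⟩ = B ⟨1, hlt1⟩ := by
        funext j
        rw [hrow2 ⟨2, hk1⟩ j (by rfl), hrow1 j]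
        have hval : ((⟨2, hk1⟩ : Fin (k' + 2)) : ℕ) = 2 := rfl
        rw [hval, if_pos (by omega)]
      have hdet0 : B.det = 0 :=
        Matrix.det_zero_of_row_eq (show (⟨2, hk1⟩ : Fin (k' + 2)) ≠ ⟨1, hlt1⟩ by
          simp [Fin.ext_iff]) hroweq
      refine iff_of_false (by rw [hdet0]; exact zero_ne_one) ?_
      rintro ⟨t, -, -, -, -, hall⟩
      exact hiwne (hall iw hiw2)
  · -- top row is all ones, equal to second row
    have hroweq : B ⟨0, hlt0⟩ = B ⟨1, hlt1⟩ := by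
      funext j
      rw [hrow0 j, hrow1 j, if_neg (by have := j.isLt; omega)]
    have hdet0 : B.det = 0 :=
      Matrix.det_zero_of_row_eq hne01 hroweq
    refine iff_of_false (by rw [hdet0]; exact zero_ne_one) ?_
    rintro ⟨t, ht, hkq, h0', -, -⟩
    have h0'' : lam ⟨0, hlt0⟩ = c + t := h0'
    omega
end
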